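/- If H_k denotes the disjoint union of k ≥ 1 copies of the cycle C_7, then the game total domination number satisfies γ_tg(H_k) = 4k + 1. -/

import Mathlib

open scoped Classical

namespace GameTD

/-- A move `v` is legal w.r.t. selected set `S` in the total domination game:
`v` totally dominates some vertex not yet totally dominated. -/
def Legal {V : Type*} (G : SimpleGraph V) (S : Finset V) (v : V) : Prop :=
  ∃ w, G.Adj v w ∧ ∀ u ∈ S, ¬ G.Adj u w

theorem Legal.not_mem {V : Type*} {G : SimpleGraph V} {S : Finset V} {v : V}
    (h : Legal G S v) : v ∉ S := by
  rcases h with ⟨w, hadj, hw⟩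
  intro hv
  exact hw v hv hadj

/-- The value of the total domination game from position `S`, with `b = true`
meaning Dominator (the minimizer) to move. The game ends when no legal move exists. -/
noncomputable def val {V : Type*} [Fintype V] (G : SimpleGraph V) (b : Bool) (S : Finset V) : ℕ :=
  let L := Finset.univ.filter (fun v => Legal G S v)
  if h : L.Nonempty then
    have hL : L.attach.Nonempty := h.attach
    if b then
      1 + L.attach.inf' hL (fun v => val G false (insert v.1 S))
    else
      1 + L.attach.sup' hL (fun v => val G true (insert v.1 S))
  else 0
termination_by (Finset.univ \ S).card
decreasing_by
  all_goals {
    have hv : Legal G S v.1 := by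
      have := v.2
      try simp only [Finset.mem_filter] at this
      exact (Finset.mem_filter.mp v.2).2
    have hvS : v.1 ∉ S := hv.not_mem
    apply Finset.card_lt_card
    constructor
    · intro x hx
      simp only [Finset.mem_sdiff] at hx ⊢
      exact ⟨hx.1, fun hmem => hx.2 (Finset.mem_insert_of_mem hmem)⟩
    · intro hsub
      have : v.1 ∈ Finset.univ \ S := by
        simp [hvS]
      have := hsub this
      simp at this
  }

/-- The game total domination number: Dominator starts from the empty position. -/
noncomputable def gammaTG {V : Type*} [Fintype V] (G : SimpleGraph V) : ℕ :=
  val G true ∅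

end GameTD

section ValInterface
open Finset GameTD
variable {W : Type*} [Fintype W] {G : SimpleGraph W} {S : Finset W} {v : W}

lemma val_terminal {b : Bool} (h : ¬ (Finset.univ.filter (fun v => Legal G S v)).Nonempty) :
    val G b S = 0 := by
  rw [GameTD.val.eq_def]
  simp only [dif_neg h]

lemma val_true_le (hv : Legal G S v) :
    val G true S ≤ 1 + val G false (insert v S) := by
  have hm : v ∈ Finset.univ.filter (fun u => Legal G S u) :=
    mem_filter.2 ⟨mem_univ _, hv⟩
  have hne : (Finset.univ.filter (fun u => Legal G S u)).Nonempty := ⟨v, hm⟩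
  rw [GameTD.val.eq_def]
  simp only [dif_pos hne, if_pos rfl]
  exact Nat.add_le_add_left (Finset.inf'_le (fun u => val G false (insert u.1 S)) (mem_attach _ ⟨v, hm⟩)) 1

lemma le_val_false (hv : Legal G S v) :
    1 + val G true (insert v S) ≤ val G false S := by
  have hm : v ∈ Finset.univ.filter (fun u => Legal G S u) :=
    mem_filter.2 ⟨mem_univ _, hv⟩
  have hne : (Finset.univ.filter (fun u => Legal G S u)).Nonempty := ⟨v, hm⟩
  conv_rhs => rw [GameTD.val.eq_def]
  simp only [dif_pos hne]
  have : Bool.false = true ↔ False := by simp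
  rw [if_neg (by simp)]
  exact Nat.add_le_add_left (Finset.le_sup' (fun u => val G true (insert u.1 S)) (mem_attach _ ⟨v, hm⟩)) 1

lemma val_false_le {c : ℕ}
    (hc : ∀ v, Legal G S v → val G true (insert v S) ≤ c) :
    val G false S ≤ 1 + c := by
  conv_lhs => rw [GameTD.val.eq_def]
  by_cases hne : (Finset.univ.filter (fun u => Legal G S u)).Nonempty
  · simp only [dif_pos hne]
    rw [if_neg (by simp)]
    refine Nat.add_le_add_left (Finset.sup'_le _ _ ?_) 1
    rintro ⟨u, hu⟩ -
    exact hc u (mem_filter.1 hu).2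
  · simp only [dif_neg hne]
    exact Nat.zero_le _

lemma le_val_true {c : ℕ}
    (hne : (Finset.univ.filter (fun v => Legal G S v)).Nonempty)
    (hc : ∀ v, Legal G S v → c ≤ val G false (insert v S)) :
    1 + c ≤ val G true S := by
  conv_rhs => rw [GameTD.val.eq_def]
  simp only [dif_pos hne, if_pos rfl]
  refine Nat.add_le_add_left (Finset.le_inf' _ _ ?_) 1
  rintro ⟨u, hu⟩ -
  exact hc u (mem_filter.1 hu).2

end ValInterface

/-- The disjoint union of `k` copies of the 7-cycle: vertex set `Fin k × Fin 7`,
with two vertices adjacent iff they lie in the same copy and are adjacent in `C_7`. -/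
def disjointC7 (k : ℕ) : SimpleGraph (Fin k × Fin 7) :=
  SimpleGraph.fromRel (fun p q => p.1 = q.1 ∧ (SimpleGraph.cycleGraph 7).Adj p.2 q.2)


attribute [-instance] instDecidableEqProd FinEnum.decEq

namespace C7aux
open Finset GameTD

abbrev V7 := Fin 7

def nbr (x : V7) : Finset V7 := {x - 1, x + 1}

lemma cyc_adj_iff : ∀ x y : V7, ((SimpleGraph.cycleGraph 7).Adj x y ↔ y ∈ nbr x) := by decide
lemma nbr_symm : ∀ x y : V7, y ∈ nbr x ↔ x ∈ nbr y := by decide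
lemma nbr_not_self : ∀ x : V7, x ∉ nbr x := by decide
lemma self_mem_nbr_succ : ∀ z : V7, z ∈ nbr (z + 1) := by decide

variable {k : ℕ}

lemma adj_iff {p q : Fin k × V7} :
    (disjointC7 k).Adj p q ↔ p.1 = q.1 ∧ q.2 ∈ nbr p.2 := by
  unfold disjointC7
  rw [SimpleGraph.fromRel_adj]
  constructor
  · rintro ⟨hne, (⟨h1, h2⟩ | ⟨h1, h2⟩)⟩
    · exact ⟨h1, (cyc_adj_iff _ _).1 h2⟩
    · exact ⟨h1.symm, (nbr_symm _ _).1 ((cyc_adj_iff _ _).1 h2)⟩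
  · rintro ⟨h1, h2⟩
    refine ⟨fun he => ?_, Or.inl ⟨h1, (cyc_adj_iff _ _).2 h2⟩⟩
    rw [he] at h2
    exact nbr_not_self _ h2

noncomputable def domc (S : Finset (Fin k × V7)) (i : Fin k) : Finset V7 :=
  univ.filter (fun z => ∃ y, (i, y) ∈ S ∧ z ∈ nbr y)

lemma mem_domc {S : Finset (Fin k × V7)} {i : Fin k} {z : V7} :
    z ∈ domc S i ↔ ∃ y, (i, y) ∈ S ∧ z ∈ nbr y := by
  simp [domc]

lemma legal_iff {S : Finset (Fin k × V7)} {i : Fin k} {x : V7} :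
    Legal (disjointC7 k) S (i, x) ↔ ¬ nbr x ⊆ domc S i := by
  constructor
  · rintro ⟨⟨j, z⟩, hadj, hw⟩ hsub
    rw [adj_iff] at hadj
    obtain ⟨hj, hz⟩ := hadj
    simp only at hj hz
    obtain ⟨y, hyS, hzy⟩ := mem_domc.1 (hsub hz)
    exact hw (i, y) hyS (adj_iff.2 ⟨hj, hzy⟩)
  · intro hns
    obtain ⟨z, hzmem, hznot⟩ := Finset.not_subset.1 hns
    refine ⟨(i, z), adj_iff.2 ⟨rfl, hzmem⟩, ?_⟩
    rintro ⟨j, y⟩ hyS hadj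
    rw [adj_iff] at hadj
    obtain ⟨hj, hz⟩ := hadj
    simp only at hj hz
    rw [hj] at hyS
    exact hznot (mem_domc.2 ⟨y, hyS, hz⟩)

lemma domc_insert_self (S : Finset (Fin k × V7)) (i : Fin k) (x : V7) :
    domc (insert (i, x) S) i = domc S i ∪ nbr x := by
  ext z
  simp only [mem_domc, mem_insert, mem_union, Prod.mk.injEq]
  aesop

lemma domc_insert_ne (S : Finset (Fin k × V7)) {i j : Fin k} (x : V7) (h : j ≠ i) :
    domc (insert (i, x) S) j = domc S j := by
  ext z
  simp only [mem_domc, mem_insert, Prod.mk.injEq]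
  aesop

lemma domc_empty (i : Fin k) : domc (∅ : Finset (Fin k × V7)) i = ∅ := by
  ext z; simp [mem_domc]

lemma exists_legal_iff {S : Finset (Fin k × V7)} :
    (univ.filter (fun v => Legal (disjointC7 k) S v)).Nonempty ↔ ∃ i, domc S i ≠ univ := by
  constructor
  · rintro ⟨⟨i, x⟩, hv⟩
    rw [mem_filter] at hv
    have h := legal_iff.1 hv.2
    exact ⟨i, fun he => h (he ▸ subset_univ _)⟩
  · rintro ⟨i, hi⟩
    have hz : ∃ z, z ∉ domc S i := by
      by_contra h
      push_neg at h
      exact hi (Finset.eq_univ_iff_forall.2 h)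
    obtain ⟨z, hz⟩ := hz
    refine ⟨(i, z + 1), mem_filter.2 ⟨mem_univ _, legal_iff.2 fun hsub => ?_⟩⟩
    exact hz (hsub (self_mem_nbr_succ z))

lemma sum_insert_comp (f : Finset V7 → ℕ) (S : Finset (Fin k × V7)) (i : Fin k) (x : V7) :
    ∑ j, f (domc (insert (i, x) S) j) + f (domc S i)
      = ∑ j, f (domc S j) + f (domc S i ∪ nbr x) := by
  have h1 : ∑ j ∈ univ.erase i, f (domc (insert (i, x) S) j)
      = ∑ j ∈ univ.erase i, f (domc S j) :=
    Finset.sum_congr rfl fun j hj => by rw [domc_insert_ne S x (mem_erase.1 hj).1]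
  rw [← Finset.sum_erase_add univ _ (mem_univ i),
      ← Finset.sum_erase_add univ (fun j => f (domc S j)) (mem_univ i),
      h1, domc_insert_self]
  ring

lemma measure_lt {α : Type*} [Fintype α] [DecidableEq α] {S : Finset α} {v u : α}
    (hv : v ∉ S) (hu : u ∉ insert v S) :
    (univ \ insert u (insert v S)).card < (univ \ S).card := by
  apply Finset.card_lt_card
  constructor
  · refine Finset.sdiff_subset_sdiff (Finset.Subset.refl _) ?_
    exact (Finset.subset_insert v S).trans (Finset.subset_insert u _)
  · intro hcon
    have h1 : v ∈ univ \ S := Finset.mem_sdiff.2 ⟨mem_univ _, hv⟩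
    have h2 := hcon h1
    simp at h2

end C7aux

namespace C7aux
open Finset GameTD

def isP (D : Finset V7) : Prop := ∃ x : V7, D = nbr x
def isE (D : Finset V7) : Prop := ∃ x : V7, D = {x, x+1, x+3, x+5}
def isG (D : Finset V7) : Prop := ∃ x : V7, D = Finset.univ \ {x}
def isB (D : Finset V7) : Prop := ∃ x : V7, D = {x, x+2, x+4}

instance : DecidablePred isP := fun _ => inferInstanceAs (Decidable (∃ _x : V7, _ = _))
instance : DecidablePred isE := fun _ => inferInstanceAs (Decidable (∃ _x : V7, _ = _))
instance : DecidablePred isG := fun _ => inferInstanceAs (Decidable (∃ _x : V7, _ = _))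
instance : DecidablePred isB := fun _ => inferInstanceAs (Decidable (∃ _x : V7, _ = _))

def qual (D : Finset V7) : Prop := D = ∅ ∨ isP D ∨ isE D ∨ isG D ∨ D = Finset.univ

instance : DecidablePred qual := fun _ => inferInstanceAs (Decidable (_ ∨ _))

def wUp (D : Finset V7) : ℕ :=
  if D = ∅ ∨ isP D then 2 else if isE D ∨ isG D then 1 else 0

def psiL (D : Finset V7) : ℕ :=
  if D = ∅ then 2 else if isP D ∨ isB D then 1 else 0

set_option maxRecDepth 100000
set_option maxHeartbeats 4000000

lemma qual_univ : qual (Finset.univ : Finset V7) := by decide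
lemma qual_empty : qual (∅ : Finset V7) := by decide
lemma qual_nbr : ∀ x : V7, qual (nbr x) := by decide
lemma wUp_univ : wUp (Finset.univ : Finset V7) = 0 := by decide
lemma wUp_empty : wUp (∅ : Finset V7) = 2 := by decide
lemma wUp_nbr : ∀ x : V7, wUp (nbr x) = 2 := by decide
lemma psiL_univ : psiL (Finset.univ : Finset V7) = 0 := by decide
lemma psiL_empty : psiL (∅ : Finset V7) = 2 := by decide
lemma empty_ne_univ : (∅ : Finset V7) ≠ Finset.univ := by decide
lemma nbr_not_sub_empty : ∀ x : V7, ¬ nbr x ⊆ (∅ : Finset V7) := by decide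

theorem U1 : ∀ D : Finset V7, qual D → ∀ x : V7, ¬ nbr x ⊆ D → D ∪ nbr x ≠ Finset.univ →
    ∃ u : V7, ¬ nbr u ⊆ D ∪ nbr x ∧ qual (D ∪ nbr x ∪ nbr u) ∧
      wUp (D ∪ nbr x ∪ nbr u) + 1 ≤ wUp D := by decide

theorem U2 : ∀ D : Finset V7, qual D → ∀ x : V7, ¬ nbr x ⊆ D → D ∪ nbr x = Finset.univ →
    1 ≤ wUp D := by decide

theorem U3 : ∀ D : Finset V7, qual D → D ≠ Finset.univ →
    ∃ u : V7, ¬ nbr u ⊆ D ∧ qual (D ∪ nbr u) ∧ wUp (D ∪ nbr u) ≤ wUp D := by decide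

theorem U4 : ∀ D : Finset V7, qual D → D ≠ Finset.univ → 1 ≤ wUp D := by decide

theorem L1 : ∀ (D : Finset V7) (x : V7), D ∪ nbr x = Finset.univ → psiL D = 0 := by decide

theorem L2 : ∀ (D : Finset V7) (x : V7), ¬ nbr x ⊆ D → D ∪ nbr x ≠ Finset.univ →
    (∃ u : V7, ¬ nbr u ⊆ D ∪ nbr x ∧ D ∪ nbr x ∪ nbr u ≠ Finset.univ ∧
      psiL D ≤ psiL (D ∪ nbr x ∪ nbr u) + 1)
    ∨ (psiL D = 0 ∧ ∃ u : V7, ¬ nbr u ⊆ D ∪ nbr x) := by decide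

theorem L3 : ∀ X : Finset V7, X ≠ Finset.univ →
    ∃ u : V7, ¬ nbr u ⊆ X ∧ psiL X ≤ psiL (X ∪ nbr u) + 1 ∧
      (X ∪ nbr u ≠ Finset.univ ∨ psiL X = 0) := by decide

end C7aux

namespace C7aux
open Finset GameTD

variable {k : ℕ}

lemma upper (S : Finset (Fin k × V7)) (hq : ∀ i, qual (domc S i)) :
    val (disjointC7 k) false S ≤ 2 * ∑ j, wUp (domc S j) := by
  by_cases hne : (univ.filter (fun v => Legal (disjointC7 k) S v)).Nonempty
  · obtain ⟨i0, hi0⟩ := exists_legal_iff.1 hne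
    have hPhi1 : 1 ≤ ∑ j, wUp (domc S j) :=
      le_trans (U4 _ (hq i0) hi0)
        (Finset.single_le_sum (f := fun j => wUp (domc S j))
          (fun _ _ => Nat.zero_le _) (mem_univ i0))
    have key : ∀ v, Legal (disjointC7 k) S v →
        val (disjointC7 k) true (insert v S) ≤ 2 * ∑ j, wUp (domc S j) - 1 := by
      rintro ⟨i, x⟩ hv
      have hvS : (i, x) ∉ S := hv.not_mem
      have hlx : ¬ nbr x ⊆ domc S i := legal_iff.1 hv
      by_cases hDx : domc S i ∪ nbr x = Finset.univ
      · by_cases hne1 :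
          (univ.filter (fun v => Legal (disjointC7 k) (insert (i, x) S) v)).Nonempty
        · obtain ⟨j, hj⟩ := exists_legal_iff.1 hne1
          have hji : j ≠ i := by
            intro h; subst h
            rw [domc_insert_self, hDx] at hj
            exact hj rfl
          have hd1j : domc (insert (i, x) S) j = domc S j := domc_insert_ne S x hji
          obtain ⟨u, hu1, hu2, hu3⟩ := U3 (domc S j) (hq j) (by rw [hd1j] at hj; exact hj)
          have hleg2 : Legal (disjointC7 k) (insert (i, x) S) (j, u) :=
            legal_iff.2 (by rw [hd1j]; exact hu1)
          have hq2 : ∀ l, qual (domc (insert (j, u) (insert (i, x) S)) l) := by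
            intro l
            by_cases hl : l = j
            · subst hl
              rw [domc_insert_self, hd1j]
              exact hu2
            · rw [domc_insert_ne _ u hl]
              by_cases hl2 : l = i
              · subst hl2
                rw [domc_insert_self, hDx]
                exact qual_univ
              · rw [domc_insert_ne _ x hl2]
                exact hq l
          have hrec := upper (insert (j, u) (insert (i, x) S)) hq2
          have hs1 := sum_insert_comp wUp S i x
          have hs2 := sum_insert_comp wUp (insert (i, x) S) j u
          rw [hd1j] at hs2
          have e1 : wUp (domc S i ∪ nbr x) = 0 := by rw [hDx]; exact wUp_univ
          have e2 : 1 ≤ wUp (domc S i) := U2 _ (hq i) x hlx hDx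
          have hstep := val_true_le hleg2
          omega
        · rw [val_terminal hne1]
          omega
      · obtain ⟨u, hu1, hu2, hu3⟩ := U1 (domc S i) (hq i) x hlx hDx
        have hleg2 : Legal (disjointC7 k) (insert (i, x) S) (i, u) :=
          legal_iff.2 (by rw [domc_insert_self]; exact hu1)
        have hq2 : ∀ l, qual (domc (insert (i, u) (insert (i, x) S)) l) := by
          intro l
          by_cases hl : l = i
          · subst hl
            rw [domc_insert_self, domc_insert_self]
            exact hu2
          · rw [domc_insert_ne _ u hl, domc_insert_ne _ x hl]
            exact hq l
        have hrec := upper (insert (i, u) (insert (i, x) S)) hq2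
        have hs1 := sum_insert_comp wUp S i x
        have hs2 := sum_insert_comp wUp (insert (i, x) S) i u
        rw [domc_insert_self] at hs2
        have hstep := val_true_le hleg2
        omega
    have hfin := val_false_le key
    omega
  · rw [val_terminal hne]
    exact Nat.zero_le _
termination_by (univ \ S).card
decreasing_by
  · exact measure_lt hvS hleg2.not_mem
  · exact measure_lt hvS hleg2.not_mem

lemma lower (S : Finset (Fin k × V7))
    (hne : (univ.filter (fun v => Legal (disjointC7 k) S v)).Nonempty) :
    2 * (∑ j, psiL (domc S j)) + 1 ≤ val (disjointC7 k) true S := by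
  have key : ∀ v, Legal (disjointC7 k) S v →
      2 * (∑ j, psiL (domc S j)) ≤ val (disjointC7 k) false (insert v S) := by
    rintro ⟨i, x⟩ hv
    have hvS : (i, x) ∉ S := hv.not_mem
    have hlx : ¬ nbr x ⊆ domc S i := legal_iff.1 hv
    by_cases hDx : domc S i ∪ nbr x = Finset.univ
    · have hpsiD : psiL (domc S i) = 0 := L1 _ x hDx
      by_cases hne1 :
          (univ.filter (fun v => Legal (disjointC7 k) (insert (i, x) S) v)).Nonempty
      · obtain ⟨j, hj⟩ := exists_legal_iff.1 hne1
        have hji : j ≠ i := by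
          intro h; subst h
          rw [domc_insert_self, hDx] at hj
          exact hj rfl
        have hd1j : domc (insert (i, x) S) j = domc S j := domc_insert_ne S x hji
        have hXne : domc S j ≠ Finset.univ := by rw [hd1j] at hj; exact hj
        obtain ⟨u, hu1, hu2, hu3⟩ := L3 (domc S j) hXne
        have hleg2 : Legal (disjointC7 k) (insert (i, x) S) (j, u) :=
          legal_iff.2 (by rw [hd1j]; exact hu1)
        have hstep := le_val_false hleg2
        by_cases hne2 :
            (univ.filter (fun v =>
              Legal (disjointC7 k) (insert (j, u) (insert (i, x) S)) v)).Nonempty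
        · have hrec := lower (insert (j, u) (insert (i, x) S)) hne2
          have hs1 := sum_insert_comp psiL S i x
          have hs2 := sum_insert_comp psiL (insert (i, x) S) j u
          rw [hd1j] at hs2
          have e1 : psiL (domc S i ∪ nbr x) = 0 := by rw [hDx]; exact psiL_univ
          omega
        · have hall : ∀ l, domc (insert (j, u) (insert (i, x) S)) l = Finset.univ := by
            by_contra h
            push_neg at h
            exact hne2 (exists_legal_iff.2 h)
          have hXu : domc S j ∪ nbr u = Finset.univ := by
            have := hall j
            rwa [domc_insert_self, hd1j] at this
          have hpsiX : psiL (domc S j) = 0 := by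
            rcases hu3 with h | h
            · exact absurd hXu h
            · exact h
          have hzero : ∑ l, psiL (domc S l) = 0 := by
            refine Finset.sum_eq_zero fun l _ => ?_
            by_cases hl : l = i
            · subst hl; exact hpsiD
            · by_cases hl2 : l = j
              · subst hl2; exact hpsiX
              · have := hall l
                rw [domc_insert_ne _ u hl2, domc_insert_ne _ x hl] at this
                rw [this]
                exact psiL_univ
          rw [hzero]
          exact Nat.zero_le _
      · have hall : ∀ l, domc (insert (i, x) S) l = Finset.univ := by
          by_contra h
          push_neg at h
          exact hne1 (exists_legal_iff.2 h)
        have hzero : ∑ l, psiL (domc S l) = 0 := by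
          refine Finset.sum_eq_zero fun l _ => ?_
          by_cases hl : l = i
          · subst hl; exact hpsiD
          · have := hall l
            rw [domc_insert_ne _ x hl] at this
            rw [this]
            exact psiL_univ
        rw [hzero]
        exact Nat.zero_le _
    · rcases L2 (domc S i) x hlx hDx with ⟨u, hu1, hu2, hu3⟩ | ⟨hpsiD, u, hu1⟩
      · have hleg2 : Legal (disjointC7 k) (insert (i, x) S) (i, u) :=
          legal_iff.2 (by rw [domc_insert_self]; exact hu1)
        have hne2 :
            (univ.filter (fun v =>
              Legal (disjointC7 k) (insert (i, u) (insert (i, x) S)) v)).Nonempty := by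
          refine exists_legal_iff.2 ⟨i, ?_⟩
          rw [domc_insert_self, domc_insert_self]
          exact hu2
        have hrec := lower (insert (i, u) (insert (i, x) S)) hne2
        have hstep := le_val_false hleg2
        have hs1 := sum_insert_comp psiL S i x
        have hs2 := sum_insert_comp psiL (insert (i, x) S) i u
        rw [domc_insert_self] at hs2
        omega
      · have hleg2 : Legal (disjointC7 k) (insert (i, x) S) (i, u) :=
          legal_iff.2 (by rw [domc_insert_self]; exact hu1)
        have hstep := le_val_false hleg2
        by_cases hne2 :
            (univ.filter (fun v =>
              Legal (disjointC7 k) (insert (i, u) (insert (i, x) S)) v)).Nonempty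
        · have hrec := lower (insert (i, u) (insert (i, x) S)) hne2
          have hs1 := sum_insert_comp psiL S i x
          have hs2 := sum_insert_comp psiL (insert (i, x) S) i u
          rw [domc_insert_self] at hs2
          omega
        · have hall : ∀ l, domc (insert (i, u) (insert (i, x) S)) l = Finset.univ := by
            by_contra h
            push_neg at h
            exact hne2 (exists_legal_iff.2 h)
          have hzero : ∑ l, psiL (domc S l) = 0 := by
            refine Finset.sum_eq_zero fun l _ => ?_
            by_cases hl : l = i
            · subst hl; exact hpsiD
            · have := hall l
              rw [domc_insert_ne _ u hl, domc_insert_ne _ x hl] at this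
              rw [this]
              exact psiL_univ
          rw [hzero]
          exact Nat.zero_le _
  have := le_val_true hne key
  omega
termination_by (univ \ S).card
decreasing_by
  · exact measure_lt hvS hleg2.not_mem
  · exact measure_lt hvS hleg2.not_mem
  · exact measure_lt hvS hleg2.not_mem

end C7aux

open Finset GameTD C7aux

/-- For the disjoint union `H_k` of `k ≥ 1` copies of `C_7`, γ_tg(H_k) = 4k + 1. -/
theorem gammaTG_disjointC7 (k : ℕ) (hk : 1 ≤ k) :
    GameTD.gammaTG (disjointC7 k) = 4 * k + 1 := by
  have hk0 : 0 < k := hk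
  set i0 : Fin k := ⟨0, hk0⟩ with hi0
  have hne : (univ.filter (fun v =>
      Legal (disjointC7 k) (∅ : Finset (Fin k × V7)) v)).Nonempty := by
    refine exists_legal_iff.2 ⟨i0, ?_⟩
    rw [domc_empty]
    exact empty_ne_univ
  have hleg0 : Legal (disjointC7 k) (∅ : Finset (Fin k × V7)) (i0, (0 : V7)) := by
    refine legal_iff.2 ?_
    rw [domc_empty]
    exact nbr_not_sub_empty 0
  have hq1 : ∀ l, qual (domc (insert (i0, (0 : V7)) (∅ : Finset (Fin k × V7))) l) := by
    intro l
    by_cases hl : l = i0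
    · subst hl
      rw [domc_insert_self, domc_empty, Finset.empty_union]
      exact qual_nbr 0
    · rw [domc_insert_ne _ _ hl, domc_empty]
      exact qual_empty
  have hsum0w : ∑ j, wUp (domc (∅ : Finset (Fin k × V7)) j) = 2 * k := by
    have h : ∀ j : Fin k, wUp (domc (∅ : Finset (Fin k × V7)) j) = 2 := fun j => by
      rw [domc_empty, wUp_empty]
    rw [Finset.sum_congr rfl fun j _ => h j, Finset.sum_const, Finset.card_univ,
      Fintype.card_fin, smul_eq_mul]
    omega
  have hsum1 : ∑ j, wUp (domc (insert (i0, (0 : V7)) (∅ : Finset (Fin k × V7))) j)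
      = 2 * k := by
    have h := sum_insert_comp wUp (∅ : Finset (Fin k × V7)) i0 0
    rw [domc_empty, Finset.empty_union, wUp_empty, wUp_nbr, hsum0w] at h
    omega
  have hup := upper (insert (i0, (0 : V7)) (∅ : Finset (Fin k × V7))) hq1
  rw [hsum1] at hup
  have hstep := val_true_le hleg0
  have hsum0p : ∑ j, psiL (domc (∅ : Finset (Fin k × V7)) j) = 2 * k := by
    have h : ∀ j : Fin k, psiL (domc (∅ : Finset (Fin k × V7)) j) = 2 := fun j => by
      rw [domc_empty, psiL_empty]
    rw [Finset.sum_congr rfl fun j _ => h j, Finset.sum_const, Finset.card_univ,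
      Fintype.card_fin, smul_eq_mul]
    omega
  have hlow := lower (∅ : Finset (Fin k × V7)) hne
  rw [hsum0p] at hlow
  have hgam : GameTD.gammaTG (disjointC7 k) = val (disjointC7 k) true ∅ := rfl
  omega
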